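/- Assume x_i s_i ≥ γ̲ · x^Ts/n for all i (with 0 < γ̲ < 1), σ ∈ (0,1), and the complementarity block s_iΔx_i + x_iΔs_i = σ x^Ts/n − x_i s_i holds. Define f_i(α) := (x_i+αΔx_i)(s_i+αΔs_i) − γ̲ (x+αΔx)^T(s+αΔs)/n. Then f_i(α) ≥ α²(Δx_iΔs_i − γ̲ Δx^TΔs/n) + α σ(1−γ̲) x^Ts/n for all α ∈ [0,1]. -/

import Mathlib

open Matrix

theorem stmt_13 {n : ℕ} (hn : 0 < n)
    (x s Δx Δs : Fin n → ℝ)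
    (hx : ∀ i, 0 < x i) (hs : ∀ i, 0 < s i)
    (γ : ℝ) (hγ0 : 0 < γ) (hγ1 : γ < 1)
    (hnbhd : ∀ i, x i * s i ≥ γ * (x ⬝ᵥ s) / n)
    (σ : ℝ) (hσ : 0 < σ) (hσ1 : σ < 1)
    (hblock : ∀ i, s i * Δx i + x i * Δs i = σ * ((x ⬝ᵥ s) / n) - x i * s i) :
    ∀ i, ∀ α ∈ Set.Icc (0 : ℝ) 1,
      (x i + α * Δx i) * (s i + α * Δs i) -
        γ * ((x + α • Δx) ⬝ᵥ (s + α • Δs)) / n ≥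
      α ^ 2 * (Δx i * Δs i - γ * (Δx ⬝ᵥ Δs) / n) +
        α * σ * (1 - γ) * (x ⬝ᵥ s) / n := by
  intro i α hα
  obtain ⟨hα0, hα1⟩ := hα
  have hn' : (n : ℝ) ≠ 0 := Nat.cast_ne_zero.mpr hn.ne'
  set S : ℝ := ∑ j, (s j * Δx j + x j * Δs j) with hSdef
  have h1 : (x + α • Δx) ⬝ᵥ (s + α • Δs)
      = x ⬝ᵥ s + α * S + α ^ 2 * (Δx ⬝ᵥ Δs) := by
    simp only [dotProduct, hSdef, Pi.add_apply, Pi.smul_apply, smul_eq_mul,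
      Finset.mul_sum, ← Finset.sum_add_distrib]
    apply Finset.sum_congr rfl
    intros; ring
  have hS : S = σ * (x ⬝ᵥ s) - x ⬝ᵥ s := by
    have : S = ∑ j : Fin n, (σ * ((x ⬝ᵥ s) / n) - x j * s j) := by
      simp only [hSdef, hblock]
    rw [this, Finset.sum_sub_distrib, Finset.sum_const, Finset.card_fin]
    have : x ⬝ᵥ s = ∑ j, x j * s j := rfl
    rw [← this]
    field_simp
    rw [nsmul_eq_mul, mul_div_assoc', mul_div_cancel_left₀ _ hn']; ring
  have hbi := hblock i
  have hni := hnbhd i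
  rw [h1, hS]
  have key : (x i + α * Δx i) * (s i + α * Δs i) -
        γ * (x ⬝ᵥ s + α * (σ * (x ⬝ᵥ s) - x ⬝ᵥ s) + α ^ 2 * (Δx ⬝ᵥ Δs)) / n -
      (α ^ 2 * (Δx i * Δs i - γ * (Δx ⬝ᵥ Δs) / n) +
        α * σ * (1 - γ) * (x ⬝ᵥ s) / n)
      = (1 - α) * (x i * s i - γ * (x ⬝ᵥ s) / n) := by
    have hexp : (x i + α * Δx i) * (s i + α * Δs i)
        = x i * s i + α * (s i * Δx i + x i * Δs i) + α ^ 2 * (Δx i * Δs i) := by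
      ring
    rw [hexp, hbi]
    field_simp
    ring
  nlinarith [mul_nonneg (sub_nonneg.mpr hα1) (sub_nonneg.mpr hni)]
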